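/- Let H_L be the truncation of the Anderson operator H = Δ + V to Λ_L^d, where V has i.i.d. potential values (X_n). For a nonzero multi-index β, let a^k_L(β) be the coefficient of the monomial X^β in Tr(H_L^k), viewed as a polynomial in the variables (X_n). Then: (1) 0 ≤ a^k_L(β) ≤ p^k(β), where p^k(β) is the number of balanced strings s in S^k with φ(s)^i = β for some i; (2) if β_n > 0 for some n ∈ Λ_{L−k}^d, then a^k_L(β) = p^k(β); (3) if β_n > 0 for some n ∉ Λ_L^d, then a^k_L(β) = 0. -/

import Mathlib

/-- The alphabet `S = {V, U_1, ..., U_d, D_1, ..., D_d}`: `none` is `V`,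
`some (v, true)` is `U_v`, `some (v, false)` is `D_v`. -/
abbrev ASym (d : ℕ) := Option (Fin d × Bool)

/-- The step in `ℤ^d` associated to a symbol. -/
def step {d : ℕ} : ASym d → (Fin d → ℤ)
  | none => 0
  | some (v, true) => Pi.single v 1
  | some (v, false) => -(Pi.single v 1)

/-- The walk `y_j(s)` associated to a string `s ∈ S^k`, starting at `0`. -/
def walk {d k : ℕ} (s : Fin k → ASym d) (j : ℕ) : Fin d → ℤ :=
  ∑ i ∈ Finset.range j, if h : i < k then step (s ⟨i, h⟩) else 0
/-- The multi-index `φ(s)`: `φ(s)_n = #{1 ≤ j ≤ k : y_j(s) = y_{j-1}(s) = n}`. -/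
def phi {d k : ℕ} (s : Fin k → ASym d) (n : Fin d → ℤ) : ℕ :=
  (Finset.univ.filter fun j : Fin k =>
    walk s ((j : ℕ) + 1) = n ∧ walk s (j : ℕ) = n).card

/-- The indicator multi-index `δ^i` of the point `i ∈ ℤ^d`. -/
def deltaIdx {d : ℕ} (i : Fin d → ℤ) (n : Fin d → ℤ) : ℕ :=
  if n = i then 1 else 0
open Classical in
/-- `p^k(β)`: the number of balanced strings `s ∈ S^k` with `φ(s)^i = β` for some `i ∈ ℤ^d`,
i.e. `β_n = φ(s)_{n-i}` for all `n`. -/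
noncomputable def pathCount (d k : ℕ) (β : (Fin d → ℤ) → ℕ) : ℕ :=
  (Finset.univ.filter fun s : Fin k → ASym d =>
    walk s k = 0 ∧ ∃ i : Fin d → ℤ, ∀ n, β n = phi s (n - i)).card

/-- The cube `Λ_L^d = ([-L,L] ∩ ℤ)^d`, as an index type. -/
abbrev Cube (d L : ℕ) := Fin d → (Finset.Icc (-(L : ℤ)) (L : ℤ))

/-- The truncated Anderson operator `H_L = 1_{Λ_L^d} (Δ + V) 1_{Λ_L^d}` as a matrix over the
polynomial ring in the potential variables `X_n`, `n ∈ ℤ^d`. -/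
noncomputable def andersonM (d L : ℕ) :
    Matrix (Cube d L) (Cube d L) (MvPolynomial (Fin d → ℤ) ℝ) := fun n m =>
  (if (∑ v : Fin d, |((n v : ℤ) - (m v : ℤ))|) = 1 then 1 else 0) +
  (if n = m then MvPolynomial.X (fun v => (n v : ℤ)) else 0)

/-- `Tr(H_L^k)` as a polynomial in the variables `X_n`. -/
noncomputable def trHpow (d L k : ℕ) : MvPolynomial (Fin d → ℤ) ℝ :=
  Matrix.trace (andersonM d L ^ k)

lemma step_some_apply {d : ℕ} (v : Fin d) (b : Bool) (w : Fin d) :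
    step (some (v, b)) w = if w = v then (if b then 1 else (-1:ℤ)) else 0 := by
  rcases b with _ | _ <;> simp [step, Pi.single_apply] <;> split <;> simp

lemma step_abs_le {d : ℕ} (a : ASym d) (v : Fin d) : |step a v| ≤ 1 := by
  rcases a with _ | ⟨v', b⟩
  · simp [step]
  · rw [step_some_apply]
    rcases b with _ | _ <;> split <;> simp

lemma step_eq_zero_iff {d : ℕ} (a : ASym d) : step a = 0 ↔ a = none := by
  rcases a with _ | ⟨v', b⟩
  · simp [step]
  · constructor
    · intro h
      have := congrFun h v'
      rw [step_some_apply] at this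
      simp at this
      rcases b with _ | _ <;> simp_all
    · simp

lemma step_some_inj {d : ℕ} : Function.Injective fun a : Fin d × Bool => step (some a) := by
  rintro ⟨v, b⟩ ⟨w, c⟩ h
  simp only at h
  have hv := congrFun h v
  have hw := congrFun h w
  rw [step_some_apply, step_some_apply] at hv
  rw [step_some_apply, step_some_apply] at hw
  by_cases hvw : v = w
  · subst hvw
    simp at hv
    rcases b with _ | _ <;> rcases c with _ | _ <;> simp_all
  · rw [if_pos rfl, if_neg hvw] at hv
    rcases b with _ | _ <;> simp at hv

lemma walk_zero {d k : ℕ} (s : Fin k → ASym d) : walk s 0 = 0 := by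
  simp [walk]

lemma walk_succ {d k : ℕ} (s : Fin k → ASym d) {j : ℕ} (h : j < k) :
    walk s (j + 1) = walk s j + step (s ⟨j, h⟩) := by
  simp [walk, Finset.sum_range_succ, h]

lemma walk_cons_succ {d k : ℕ} (a : ASym d) (s : Fin k → ASym d) (j : ℕ) :
    walk (Fin.cons a s) (j + 1) = step a + walk s j := by
  unfold walk
  rw [Finset.sum_range_succ']
  have h1 : ∀ i ∈ Finset.range j, (if h : i + 1 < k + 1 then step (Fin.cons (α := fun _ : Fin (k+1) => ASym d) a s ⟨i+1, h⟩) else 0)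
      = (if h : i < k then step (s ⟨i, h⟩) else 0) := by
    intro i _
    by_cases hi : i < k
    · rw [dif_pos (by omega : i + 1 < k + 1), dif_pos hi]
      exact congrArg step (Fin.cons_succ (α := fun _ : Fin (k+1) => ASym d) a s ⟨i, hi⟩)
    · rw [dif_neg (by omega : ¬ i + 1 < k + 1), dif_neg hi]
  rw [Finset.sum_congr rfl h1, dif_pos (Nat.succ_pos k), add_comm]
  rfl


def emb {d L : ℕ} (n : Cube d L) : Fin d → ℤ := fun v => (n v : ℤ)

lemma emb_inj {d L : ℕ} : Function.Injective (emb (d := d) (L := L)) := by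
  intro n m h
  funext v
  exact Subtype.ext (congrFun h v)

lemma emb_bound {d L : ℕ} (n : Cube d L) (v : Fin d) : |emb n v| ≤ (L : ℤ) := by
  have := (n v).2
  rw [Finset.mem_Icc] at this
  rw [abs_le]
  exact ⟨this.1, this.2⟩

lemma exists_emb {d L : ℕ} (x : Fin d → ℤ) (hx : ∀ v, |x v| ≤ (L : ℤ)) :
    ∃ p : Cube d L, emb p = x := by
  refine ⟨fun v => ⟨x v, ?_⟩, rfl⟩
  rw [Finset.mem_Icc]
  have := hx v
  rw [abs_le] at this
  exact this

lemma absSum_eq_one_iff {d : ℕ} (x : Fin d → ℤ) :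
    (∑ v, |x v|) = 1 ↔ ∃ a : Fin d × Bool, x = step (some a) := by
  constructor
  · intro h
    have hex : ∃ v, x v ≠ 0 := by
      by_contra hc
      push_neg at hc
      simp [hc] at h
    obtain ⟨v, hv⟩ := hex
    have hsplit : ∑ w, |x w| = |x v| + ∑ w ∈ Finset.univ.erase v, |x w| :=
      (Finset.add_sum_erase _ _ (Finset.mem_univ v)).symm
    have h1 : (1:ℤ) ≤ |x v| := Int.one_le_abs hv
    have hrest : ∑ w ∈ Finset.univ.erase v, |x w| = 0 := by
      have hnn : (0:ℤ) ≤ ∑ w ∈ Finset.univ.erase v, |x w| :=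
        Finset.sum_nonneg fun w _ => abs_nonneg _
      omega
    have hzero : ∀ w ∈ Finset.univ.erase v, x w = 0 := by
      intro w hw
      have := (Finset.sum_eq_zero_iff_of_nonneg fun w _ => abs_nonneg (x w)).1 hrest w hw
      exact abs_eq_zero.1 this
    have hxv : |x v| = 1 := by omega
    have hx : x = Pi.single v (x v) := by
      funext w
      by_cases hw : w = v
      · subst hw; simp
      · rw [Pi.single_apply, if_neg hw]
        exact hzero w (Finset.mem_erase.2 ⟨hw, Finset.mem_univ w⟩)
    rcases abs_eq (by norm_num : (0:ℤ) ≤ 1) |>.1 hxv with h1 | h1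
    · exact ⟨(v, true), by rw [hx, h1]; rfl⟩
    · refine ⟨(v, false), ?_⟩
      rw [hx, h1]
      show Pi.single v (-1) = step (some (v, false))
      funext w
      rw [step_some_apply, Pi.single_apply]
      split <;> simp
  · rintro ⟨⟨v, b⟩, rfl⟩
    have : ∀ w, |step (some (v, b)) w| = if w = v then 1 else 0 := by
      intro w
      rw [step_some_apply]
      split <;> rcases b with _ | _ <;> simp
    simp only [this]
    simp

lemma walk_sub_bound {d k : ℕ} (s : Fin k → ASym d) {b j : ℕ} (hbj : b ≤ j) (v : Fin d) :
    |walk s j v - walk s b v| ≤ (j : ℤ) - b := by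
  have hw : walk s j v - walk s b v
      = ∑ i ∈ Finset.Ico b j, (if h : i < k then step (s ⟨i, h⟩) else 0) v := by
    rw [Finset.sum_Ico_eq_sub _ hbj]
    simp [walk, Finset.sum_apply]
  rw [hw]
  calc |∑ i ∈ Finset.Ico b j, (if h : i < k then step (s ⟨i, h⟩) else 0) v|
      ≤ ∑ i ∈ Finset.Ico b j, |(if h : i < k then step (s ⟨i, h⟩) else 0) v| :=
        Finset.abs_sum_le_sum_abs _ _
    _ ≤ ∑ _i ∈ Finset.Ico b j, 1 := by
        apply Finset.sum_le_sum
        intro i _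
        by_cases hi : i < k
        · rw [dif_pos hi]; exact step_abs_le _ v
        · rw [dif_neg hi]; simp
    _ = (j : ℤ) - b := by
        rw [Finset.sum_const, Nat.card_Ico]
        simp
        omega

lemma walk_abs_le {d k : ℕ} (s : Fin k → ASym d) (j : ℕ) (v : Fin d) :
    |walk s j v| ≤ (j : ℤ) := by
  have := walk_sub_bound s (Nat.zero_le j) v
  rw [walk_zero] at this
  simpa using this

lemma walk_dist_le {d k : ℕ} (s : Fin k → ASym d) {a b : ℕ} (ha : a ≤ k) (hb : b ≤ k)
    (v : Fin d) : |walk s a v - walk s b v| ≤ (k : ℤ) := by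
  rcases le_total b a with h | h
  · have := walk_sub_bound s h v
    have : |walk s a v - walk s b v| ≤ (a : ℤ) - b := this
    have hak : (a:ℤ) ≤ k := by exact_mod_cast ha
    omega
  · have := walk_sub_bound s h v
    rw [abs_sub_comm]
    have hbk : (b:ℤ) ≤ k := by exact_mod_cast hb
    omega

open Classical in
noncomputable def Ef {d k : ℕ} (s : Fin k → ASym d) (x : Fin d → ℤ) : (Fin d → ℤ) →₀ ℕ :=
  ∑ j : Fin k, if s j = none then Finsupp.single (x + walk s (j : ℕ)) 1 else 0

open Classical in
lemma Ef_apply {d k : ℕ} (s : Fin k → ASym d) (x m : Fin d → ℤ) :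
    Ef s x m = phi s (m - x) := by
  rw [Ef, Finsupp.finset_sum_apply, phi, Finset.card_filter]
  apply Finset.sum_congr rfl
  intro j _
  have hlt : (j:ℕ) < k := j.2
  have hstep : walk s ((j:ℕ)+1) = walk s (j:ℕ) + step (s j) := by
    have := walk_succ s hlt
    rwa [Fin.eta] at this
  rw [apply_ite (fun F : (Fin d → ℤ) →₀ ℕ => F m), Finsupp.single_apply]
  by_cases h1 : s j = none
  · rw [if_pos h1]
    have hsame : walk s ((j:ℕ)+1) = walk s (j:ℕ) := by
      rw [hstep, (step_eq_zero_iff _).2 h1, add_zero]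
    by_cases h2 : walk s (j:ℕ) = m - x
    · rw [if_pos (by rw [h2]; funext v; simp : x + walk s (j:ℕ) = m),
        if_pos ⟨by rw [hsame, h2], h2⟩]
    · rw [if_neg (fun hc => h2 (by rw [← hc]; funext v; simp)),
        if_neg (fun hc => h2 hc.2)]
  · rw [if_neg h1, if_neg]
    · simp
    · rintro ⟨ha, hb⟩
      apply h1
      rw [← step_eq_zero_iff]
      have : walk s ((j:ℕ)) + step (s j) = walk s (j:ℕ) := by
        rw [← hstep, ha, hb]
      have := congrArg (fun z => z - walk s (j:ℕ)) this
      simpa using this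

open Classical in
lemma Ef_cons {d k : ℕ} (a : ASym d) (s : Fin k → ASym d) (x : Fin d → ℤ) :
    Ef (Fin.cons a s) x
      = (if a = none then Finsupp.single x 1 else 0) + Ef s (x + step a) := by
  rw [Ef, Fin.sum_univ_succ]
  congr 1
  · simp [walk]
  · rw [Ef]
    apply Finset.sum_congr rfl
    intro j _
    rw [Fin.cons_succ]
    have : walk (Fin.cons a s) ((j.succ : ℕ)) = step a + walk s (j : ℕ) := by
      show walk (Fin.cons a s) ((j : ℕ) + 1) = _
      exact walk_cons_succ a s (j : ℕ)
    rw [this]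
    congr 2
    funext v
    simp only [Pi.add_apply]
    ring

lemma phi_pos_exists {d k : ℕ} (s : Fin k → ASym d) (y : Fin d → ℤ) (h : 0 < phi s y) :
    ∃ j : Fin k, walk s (j : ℕ) = y := by
  rw [phi, Finset.card_pos] at h
  obtain ⟨j, hj⟩ := h
  rw [Finset.mem_filter] at hj
  exact ⟨j, hj.2.2⟩

lemma phi_support_bound {d k : ℕ} (s : Fin k → ASym d) (y : Fin d → ℤ) (h : 0 < phi s y)
    (v : Fin d) : |y v| ≤ (k : ℤ) := by
  obtain ⟨j, hj⟩ := phi_pos_exists s y h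
  rw [← hj]
  calc |walk s (j:ℕ) v| ≤ ((j:ℕ) : ℤ) := walk_abs_le s _ v
    _ ≤ (k : ℤ) := by exact_mod_cast j.2.le

open Classical in
noncomputable def Tm (d L : ℕ) (a : ASym d) :
    Matrix (Cube d L) (Cube d L) (MvPolynomial (Fin d → ℤ) ℝ) := fun n m =>
  if emb m = emb n + step a then (if a = none then MvPolynomial.X (emb n) else 1) else 0

lemma step_none {d : ℕ} : step (d := d) none = 0 := rfl

open Classical in
lemma sum_Tm (d L : ℕ) : ∑ a : ASym d, Tm d L a = andersonM d L := by
  funext n m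
  rw [Matrix.sum_apply]
  rw [Fintype.sum_option]
  have hnone : Tm d L none n m = if n = m then MvPolynomial.X (emb n) else 0 := by
    rw [Tm]
    simp only [step_none, add_zero]
    by_cases h : n = m
    · rw [if_pos (by rw [h] : emb m = emb n), if_pos h]
      simp
    · rw [if_neg (fun hc => h (emb_inj hc).symm), if_neg h]
  have hsome : (∑ a : Fin d × Bool, Tm d L (some a) n m)
      = if (∑ v : Fin d, |((n v : ℤ) - (m v : ℤ))|) = 1 then 1 else 0 := by
    have hcond : ((∑ v : Fin d, |((n v : ℤ) - (m v : ℤ))|) = 1)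
        ↔ ∃ a : Fin d × Bool, (fun w => emb m w - emb n w) = step (some a) := by
      have hx : (∑ v : Fin d, |((n v : ℤ) - (m v : ℤ))|)
          = ∑ v : Fin d, |(fun w => emb m w - emb n w) v| := by
        apply Finset.sum_congr rfl
        intro v _
        rw [abs_sub_comm]
        rfl
      rw [hx]
      exact absSum_eq_one_iff _
    rw [if_congr hcond rfl rfl]
    have hterm : ∀ a : Fin d × Bool, Tm d L (some a) n m
        = if (fun w => emb m w - emb n w) = step (some a) then 1 else 0 := by
      intro a
      rw [Tm, if_neg (by simp : (some a : ASym d) ≠ none)]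
      apply if_congr _ rfl rfl
      constructor
      · intro h
        funext w
        have := congrFun h w
        simp only [Pi.add_apply] at this
        omega
      · intro h
        funext w
        have := congrFun h w
        simp only [Pi.add_apply] at this ⊢
        omega
    rw [Finset.sum_congr rfl (fun a _ => hterm a)]
    by_cases hex : ∃ a : Fin d × Bool, (fun w => emb m w - emb n w) = step (some a)
    · obtain ⟨a0, ha0⟩ := hex
      rw [if_pos ⟨a0, ha0⟩]
      have hfun : ∀ a ∈ Finset.univ, (if (fun w => emb m w - emb n w) = step (some a)
          then (1 : MvPolynomial (Fin d → ℤ) ℝ) else 0) = if a = a0 then 1 else 0 := by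
        intro a _
        apply if_congr _ rfl rfl
        constructor
        · intro h
          exact step_some_inj (h.symm.trans ha0)
        · rintro rfl
          exact ha0
      rw [Finset.sum_congr rfl hfun,
        Finset.sum_ite_eq' Finset.univ a0 (fun _ => (1 : MvPolynomial (Fin d → ℤ) ℝ)),
        if_pos (Finset.mem_univ a0)]
    · rw [if_neg hex]
      push_neg at hex
      apply Finset.sum_eq_zero
      intro a _
      rw [if_neg (hex a)]
  rw [hnone, hsome, andersonM]
  rw [add_comm]
  rfl

open Classical in
lemma andersonM_eq_sum {d L : ℕ} (n p : Cube d L) :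
    andersonM d L n p = ∑ a : ASym d, Tm d L a n p := by
  rw [← sum_Tm, Matrix.sum_apply]

open Classical in
lemma andersonM_pow_apply (d L : ℕ) : ∀ (k : ℕ) (n m : Cube d L),
    (andersonM d L ^ k) n m = ∑ s : Fin k → ASym d,
      if emb m = emb n + walk s k ∧ (∀ j ≤ k, ∀ v, |(emb n + walk s j) v| ≤ (L:ℤ))
      then MvPolynomial.monomial (Ef s (emb n)) (1:ℝ) else 0 := by
  intro k
  induction k with
  | zero =>
    intro n m
    rw [pow_zero, Matrix.one_apply, Fintype.sum_unique]
    have hval : MvPolynomial.monomial (Ef (default : Fin 0 → ASym d) (emb n)) (1:ℝ) = 1 := by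
      have h0 : Ef (default : Fin 0 → ASym d) (emb n) = 0 := by
        rw [Ef]
        simp
      rw [h0]
      simp
    by_cases hnm : n = m
    · subst hnm
      rw [if_pos rfl, if_pos ⟨by rw [walk_zero, add_zero], by
        intro j hj v
        rw [Nat.le_zero] at hj
        subst hj
        rw [walk_zero, add_zero]
        exact emb_bound n v⟩]
      exact hval.symm
    · rw [if_neg hnm, if_neg]
      rintro ⟨h1, -⟩
      rw [walk_zero, add_zero] at h1
      exact hnm (emb_inj h1).symm
  | succ k ih =>
    intro n m
    have hstep1 : (andersonM d L ^ (k+1)) n m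
        = ∑ a : ASym d, ∑ s : Fin k → ASym d, ∑ p : Cube d L,
          Tm d L a n p * (if emb m = emb p + walk s k ∧
            (∀ j ≤ k, ∀ v, |(emb p + walk s j) v| ≤ (L:ℤ))
          then MvPolynomial.monomial (Ef s (emb p)) (1:ℝ) else 0) := by
      rw [pow_succ', Matrix.mul_apply]
      rw [Finset.sum_congr rfl (fun p _ => by
        rw [andersonM_eq_sum, ih, Finset.sum_mul_sum])]
      rw [Finset.sum_comm]
      apply Finset.sum_congr rfl
      intro a _
      rw [Finset.sum_comm]
    have hpair : (∑ a : ASym d, ∑ s : Fin k → ASym d, ∑ p : Cube d L,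
          Tm d L a n p * (if emb m = emb p + walk s k ∧
            (∀ j ≤ k, ∀ v, |(emb p + walk s j) v| ≤ (L:ℤ))
          then MvPolynomial.monomial (Ef s (emb p)) (1:ℝ) else 0))
        = ∑ q : ASym d × (Fin k → ASym d), ∑ p : Cube d L,
          Tm d L q.1 n p * (if emb m = emb p + walk q.2 k ∧
            (∀ j ≤ k, ∀ v, |(emb p + walk q.2 j) v| ≤ (L:ℤ))
          then MvPolynomial.monomial (Ef q.2 (emb p)) (1:ℝ) else 0) :=
      by rw [Fintype.sum_prod_type]
    rw [hstep1, hpair]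
    apply Fintype.sum_equiv (Fin.consEquiv (fun _ : Fin (k+1) => ASym d))
    rintro ⟨a, s⟩
    have hconseq : (Fin.consEquiv (fun _ : Fin (k+1) => ASym d)) (a, s) = Fin.cons a s := rfl
    rw [hconseq]
    by_cases hcube : ∀ v, |(emb n + step a) v| ≤ (L:ℤ)
    · obtain ⟨p0, hp0⟩ := exists_emb _ hcube
      have hcollapse : ∀ p ∈ (Finset.univ : Finset (Cube d L)),
          Tm d L a n p * (if emb m = emb p + walk s k ∧
            (∀ j ≤ k, ∀ v, |(emb p + walk s j) v| ≤ (L:ℤ))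
          then MvPolynomial.monomial (Ef s (emb p)) (1:ℝ) else 0)
          = if p = p0 then
              (fun q : Cube d L => (if a = none then MvPolynomial.X (emb n) else 1) *
                (if emb m = emb q + walk s k ∧
                  (∀ j ≤ k, ∀ v, |(emb q + walk s j) v| ≤ (L:ℤ))
                then MvPolynomial.monomial (Ef s (emb q)) (1:ℝ) else 0)) p
            else 0 := by
        intro p _
        by_cases hp : p = p0
        · rw [if_pos hp, Tm, if_pos (by rw [hp]; exact hp0)]
        · rw [if_neg hp, Tm, if_neg (fun hc => hp (emb_inj (hc.trans hp0.symm))), zero_mul]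
      rw [Finset.sum_congr rfl hcollapse,
        Finset.sum_ite_eq' Finset.univ p0 _, if_pos (Finset.mem_univ p0)]
      have hpt : ∀ j : ℕ, emb p0 + walk s j = emb n + walk (Fin.cons a s) (j+1) := by
        intro j
        rw [walk_cons_succ, hp0]
        funext v
        simp only [Pi.add_apply]
        ring
      have hiff : (emb m = emb p0 + walk s k ∧
            (∀ j ≤ k, ∀ v, |(emb p0 + walk s j) v| ≤ (L:ℤ)))
          ↔ (emb m = emb n + walk (Fin.cons a s) (k+1) ∧
            (∀ j ≤ k+1, ∀ v, |(emb n + walk (Fin.cons a s) j) v| ≤ (L:ℤ))) := by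
        constructor
        · rintro ⟨h1, h2⟩
          refine ⟨by rw [h1, hpt k], ?_⟩
          intro j hj v
          match j with
          | 0 =>
            rw [walk_zero, add_zero]
            exact emb_bound n v
          | (j' + 1) =>
            rw [← hpt j']
            exact h2 j' (by omega) v
        · rintro ⟨h1, h2⟩
          exact ⟨by rw [hpt k]; exact h1,
            fun j hj v => by rw [hpt j]; exact h2 (j+1) (by omega) v⟩
      rw [mul_ite, mul_zero]
      apply if_congr hiff _ rfl
      rw [hp0, Ef_cons]
      by_cases ha : a = none
      · subst ha
        rw [if_pos rfl, if_pos rfl,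
          show (MvPolynomial.X (emb n) : MvPolynomial (Fin d → ℤ) ℝ)
            = MvPolynomial.monomial (Finsupp.single (emb n) 1) 1 from rfl,
          MvPolynomial.monomial_mul, one_mul]
      · rw [if_neg ha, if_neg ha, one_mul, zero_add]
    · rw [Finset.sum_eq_zero (fun p _ => by
        rw [Tm, if_neg (fun hc => hcube (fun v => by
          rw [← hc]; exact emb_bound p v)), zero_mul]),
        if_neg]
      rintro ⟨-, h2⟩
      apply hcube
      intro v
      have hw1 : walk (Fin.cons a s) 1 = step a + walk s 0 := walk_cons_succ a s 0
      have := h2 1 (by omega) v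
      rw [hw1, walk_zero, add_zero] at this
      exact this


open Classical in
lemma coeff_card (d L k : ℕ) (β : (Fin d → ℤ) →₀ ℕ) :
    MvPolynomial.coeff β (trHpow d L k)
      = ((Finset.univ.filter fun q : Cube d L × (Fin k → ASym d) =>
          walk q.2 k = 0 ∧ (∀ j ≤ k, ∀ v, |(emb q.1 + walk q.2 j) v| ≤ (L:ℤ))
          ∧ Ef q.2 (emb q.1) = β).card : ℝ) := by
  have h1 : trHpow d L k = ∑ n : Cube d L, ∑ s : Fin k → ASym d,
      if emb n = emb n + walk s k ∧ (∀ j ≤ k, ∀ v, |(emb n + walk s j) v| ≤ (L:ℤ))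
      then MvPolynomial.monomial (Ef s (emb n)) (1:ℝ) else 0 := by
    rw [trHpow, Matrix.trace]
    exact Finset.sum_congr rfl fun n _ => andersonM_pow_apply d L k n n
  rw [h1, MvPolynomial.coeff_sum]
  have h2 : ∀ n : Cube d L, MvPolynomial.coeff β (∑ s : Fin k → ASym d,
      if emb n = emb n + walk s k ∧ (∀ j ≤ k, ∀ v, |(emb n + walk s j) v| ≤ (L:ℤ))
      then MvPolynomial.monomial (Ef s (emb n)) (1:ℝ) else 0)
      = ∑ s : Fin k → ASym d, if walk s k = 0 ∧
          (∀ j ≤ k, ∀ v, |(emb n + walk s j) v| ≤ (L:ℤ)) ∧ Ef s (emb n) = β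
        then (1:ℝ) else 0 := by
    intro n
    rw [MvPolynomial.coeff_sum]
    apply Finset.sum_congr rfl
    intro s _
    rw [apply_ite (MvPolynomial.coeff β), MvPolynomial.coeff_monomial, MvPolynomial.coeff_zero]
    by_cases hc : walk s k = 0 ∧ (∀ j ≤ k, ∀ v, |(emb n + walk s j) v| ≤ (L:ℤ))
        ∧ Ef s (emb n) = β
    · rw [if_pos hc, if_pos ⟨by rw [hc.1, add_zero], hc.2.1⟩, if_pos hc.2.2]
    · by_cases hc1 : emb n = emb n + walk s k ∧ (∀ j ≤ k, ∀ v, |(emb n + walk s j) v| ≤ (L:ℤ))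
      · rw [if_pos hc1, if_neg hc, if_neg]
        intro hE
        exact hc ⟨(left_eq_add.1 hc1.1), hc1.2, hE⟩
      · rw [if_neg hc1, if_neg hc]
  rw [Finset.sum_congr rfl fun n _ => h2 n]
  have h3 : (∑ q : Cube d L × (Fin k → ASym d),
      if walk q.2 k = 0 ∧ (∀ j ≤ k, ∀ v, |(emb q.1 + walk q.2 j) v| ≤ (L:ℤ))
          ∧ Ef q.2 (emb q.1) = β then (1:ℝ) else 0)
      = ∑ n : Cube d L, ∑ s : Fin k → ASym d, if walk s k = 0 ∧
          (∀ j ≤ k, ∀ v, |(emb n + walk s j) v| ≤ (L:ℤ)) ∧ Ef s (emb n) = β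
        then (1:ℝ) else 0 := Fintype.sum_prod_type _
  rw [← h3, Finset.sum_boole]

open Classical in
lemma translate_unique {d k : ℕ} (s : Fin k → ASym d) (β : (Fin d → ℤ) →₀ ℕ) (hβ : β ≠ 0)
    {x x' : Fin d → ℤ} (hx : ∀ m, (β m : ℕ) = phi s (m - x)) (hx' : ∀ m, (β m : ℕ) = phi s (m - x')) :
    x = x' := by
  by_contra hne
  have hex : ∃ v, x v ≠ x' v := by
    by_contra hc
    push_neg at hc
    exact hne (funext hc)
  obtain ⟨v, hv⟩ := hex
  set c : Fin d → ℤ := x' - x with hc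
  have hcv : c v ≠ 0 := fun h => hv (by
    have : x' v - x v = 0 := h
    omega)
  have key : ∀ y : Fin d → ℤ, phi s y = phi s (y - c) := by
    intro y
    have h1 : phi s y = β (y + x) := by
      rw [hx (y + x)]
      congr 1
      funext w
      simp
    have h2 : (β (y + x) : ℕ) = phi s (y - c) := by
      rw [hx' (y + x)]
      congr 1
      funext w
      simp [hc]
      ring
    rw [h1, h2]
  obtain ⟨m0, hm0⟩ := Finsupp.ne_iff.1 hβ
  simp only [Finsupp.coe_zero, Pi.zero_apply] at hm0
  set y0 : Fin d → ℤ := m0 - x with hy0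
  have hpos : 0 < phi s y0 := by
    have h := hx m0
    rw [hy0]
    rw [← h]
    omega
  have hiter : ∀ t : ℕ, phi s (y0 - t • c) = phi s y0 := by
    intro t
    induction t with
    | zero => simp
    | succ t iht =>
      have : y0 - (t + 1) • c = (y0 - t • c) - c := by
        funext w
        simp [add_smul]
        ring
      rw [this, ← key (y0 - t • c), iht]
  set t : ℕ := k + (y0 v).natAbs + 1 with ht
  have hb : |(y0 - t • c) v| ≤ (k : ℤ) := by
    apply phi_support_bound
    rw [hiter t]
    exact hpos
  have happ : (y0 - t • c) v = y0 v - (t : ℤ) * c v := by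
    simp
  rw [happ] at hb
  have h1 : |(t : ℤ) * c v| - |y0 v| ≤ |y0 v - (t:ℤ) * c v| := by
    rw [abs_sub_comm]
    exact abs_sub_abs_le_abs_sub _ _
  have h2 : |(t : ℤ) * c v| = (t : ℤ) * |c v| := by
    rw [abs_mul, Nat.abs_cast]
  have h3 : (1 : ℤ) ≤ |c v| := Int.one_le_abs hcv
  have h4 : (t : ℤ) = (k : ℤ) + |y0 v| + 1 := by
    rw [ht, Int.abs_eq_natAbs]
    push_cast
    ring
  have h5 : (t:ℤ) ≤ (t:ℤ) * |c v| := le_mul_of_one_le_right (by positivity) h3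
  have h6 : (0:ℤ) ≤ |y0 v| := abs_nonneg _
  linarith


open Classical in
lemma Ef_eq_iff {d k : ℕ} (s : Fin k → ASym d) (x : Fin d → ℤ) (β : (Fin d → ℤ) →₀ ℕ) :
    Ef s x = β ↔ ∀ n, (β n : ℕ) = phi s (n - x) := by
  constructor
  · intro h n
    rw [← h, Ef_apply]
  · intro h
    ext n
    rw [Ef_apply]
    exact (h n).symm


/-- For a nonzero multi-index `β`, the coefficient `a^k_L(β)` of `X^β` in `Tr(H_L^k)`
satisfies: (1) `0 ≤ a^k_L(β) ≤ p^k(β)`; (2) if `β_n > 0` for some `n ∈ Λ_{L-k}^d` then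
`a^k_L(β) = p^k(β)`; (3) if `β_n > 0` for some `n ∉ Λ_L^d` then `a^k_L(β) = 0`. -/
theorem coeff_trace_anderson (d L k : ℕ) (β : (Fin d → ℤ) →₀ ℕ) (hβ : β ≠ 0) :
    (0 ≤ MvPolynomial.coeff β (trHpow d L k) ∧
      MvPolynomial.coeff β (trHpow d L k) ≤ (pathCount d k (fun n => β n) : ℝ)) ∧
    ((∃ n : Fin d → ℤ, 0 < β n ∧ ∀ v, |n v| ≤ (L : ℤ) - (k : ℤ)) →
      MvPolynomial.coeff β (trHpow d L k) = (pathCount d k (fun n => β n) : ℝ)) ∧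
    ((∃ n : Fin d → ℤ, 0 < β n ∧ ¬(∀ v, |n v| ≤ (L : ℤ))) →
      MvPolynomial.coeff β (trHpow d L k) = 0) := by
  classical
  set A : Finset (Cube d L × (Fin k → ASym d)) := Finset.univ.filter fun q =>
      walk q.2 k = 0 ∧ (∀ j ≤ k, ∀ v, |(emb q.1 + walk q.2 j) v| ≤ (L:ℤ))
      ∧ Ef q.2 (emb q.1) = β with hA
  have hcoeff : MvPolynomial.coeff β (trHpow d L k) = (A.card : ℝ) := coeff_card d L k β
  set P : Finset (Fin k → ASym d) := Finset.univ.filter fun s =>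
      walk s k = 0 ∧ ∃ i : Fin d → ℤ, ∀ n, (β n : ℕ) = phi s (n - i) with hP
  have hPcount : pathCount d k (fun n => β n) = P.card := by
    rw [pathCount, hP]
  have hmemA : ∀ q : Cube d L × (Fin k → ASym d), q ∈ A ↔ walk q.2 k = 0 ∧
      (∀ j ≤ k, ∀ v, |(emb q.1 + walk q.2 j) v| ≤ (L:ℤ)) ∧
      ∀ n, (β n : ℕ) = phi q.2 (n - emb q.1) := by
    intro q
    rw [hA, Finset.mem_filter, Ef_eq_iff]
    simp [Finset.mem_univ]
  have hmemP : ∀ s : Fin k → ASym d, s ∈ P ↔ walk s k = 0 ∧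
      ∃ i : Fin d → ℤ, ∀ n, (β n : ℕ) = phi s (n - i) := by
    intro s
    rw [hP, Finset.mem_filter]
    simp [Finset.mem_univ]
  have hinj : ∀ q ∈ A, ∀ q' ∈ A, q.2 = q'.2 → q = q' := by
    intro q hq q' hq' h2
    obtain ⟨-, -, hq3⟩ := (hmemA q).1 hq
    obtain ⟨-, -, hq3'⟩ := (hmemA q').1 hq'
    rw [h2] at hq3
    exact Prod.ext (emb_inj (translate_unique q'.2 β hβ hq3 hq3')) h2
  have hmaps : ∀ q ∈ A, q.2 ∈ P := by
    intro q hq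
    obtain ⟨h1, h2, h3⟩ := (hmemA q).1 hq
    exact (hmemP q.2).2 ⟨h1, emb q.1, h3⟩
  refine ⟨⟨by rw [hcoeff]; positivity, ?_⟩, ?_, ?_⟩
  · rw [hcoeff, hPcount]
    have hle : A.card ≤ P.card := by
      apply Finset.card_le_card_of_injOn (fun q => q.2) (fun q hq => hmaps q hq)
      intro q hq q' hq' h
      exact hinj q (Finset.mem_coe.1 hq) q' (Finset.mem_coe.1 hq') h
    exact_mod_cast hle
  · rintro ⟨n0, hn0pos, hn0cube⟩
    rw [hcoeff, hPcount]
    have hcard : A.card = P.card := by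
      apply Finset.card_bij (fun q _ => q.2) hmaps
      · intro q hq q' hq' h
        exact hinj q hq q' hq' h
      · intro s hs
        obtain ⟨h1, i, hi⟩ := (hmemP s).1 hs
        have hphi : 0 < phi s (n0 - i) := by
          rw [← hi n0]
          exact hn0pos
        obtain ⟨j0, hj0⟩ := phi_pos_exists s (n0 - i) hphi
        have hbound : ∀ j ≤ k, ∀ v, |(i + walk s j) v| ≤ (L:ℤ) := by
          intro j hj v
          have hd := walk_dist_le s hj j0.2.le v
          have hiv : i v = n0 v - walk s (j0:ℕ) v := by
            have hw := congrFun hj0 v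
            simp only [Pi.sub_apply] at hw
            omega
          have heq : (i + walk s j) v = n0 v + (walk s j v - walk s (j0:ℕ) v) := by
            simp only [Pi.add_apply]
            omega
          rw [heq]
          have habs := abs_add_le (n0 v) (walk s j v - walk s (j0:ℕ) v)
          have hn := hn0cube v
          linarith
        obtain ⟨p, hp⟩ := exists_emb i (by
          intro v
          have hb := hbound 0 (Nat.zero_le k) v
          rw [walk_zero, add_zero] at hb
          exact hb)
        refine ⟨(p, s), ?_, rfl⟩
        apply (hmemA (p, s)).2
        refine ⟨h1, ?_, ?_⟩
        · intro j hj v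
          rw [hp]
          exact hbound j hj v
        · intro n
          rw [hp]
          exact hi n
    rw [hcard]
  · rintro ⟨n0, hn0pos, hout⟩
    rw [hcoeff]
    have hempty : A = ∅ := by
      rw [Finset.eq_empty_iff_forall_notMem]
      intro q hq
      obtain ⟨h1, h2, h3⟩ := (hmemA q).1 hq
      have hphi : 0 < phi q.2 (n0 - emb q.1) := by
        rw [← h3 n0]
        exact hn0pos
      obtain ⟨j0, hj0⟩ := phi_pos_exists _ _ hphi
      apply hout
      intro v
      have hb := h2 (j0:ℕ) j0.2.le v
      have heq : (emb q.1 + walk q.2 (j0:ℕ)) v = n0 v := by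
        have hw := congrFun hj0 v
        simp only [Pi.sub_apply] at hw
        simp only [Pi.add_apply]
        omega
      rw [heq] at hb
      exact hb
    rw [hempty]
    simp
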